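/- For 0 ≤ τ < α < 1, ρ_mSt(w; α, τ) ∼ (α/((α−τ)Γ(1−α))) w^{−1−α}/log(1/w) as w → 0. -/

import Mathlib

open Real Filter Set intervalIntegral MeasureTheory

/-- Lévy intensity of the mixed stable CRM. -/
noncomputable def rhoMSt (α τ w : ℝ) : ℝ :=
  (1 / (α - τ)) * ∫ s in τ..α, (s / Real.Gamma (1 - s)) * w ^ (-1 - s)

theorem stmt_12 (α τ : ℝ) (h0 : 0 ≤ τ) (h1 : τ < α) (h2 : α < 1) :
    Filter.Tendsto
      (fun w : ℝ =>
        rhoMSt α τ w /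
          ((α / ((α - τ) * Real.Gamma (1 - α))) * w ^ (-1 - α) / Real.log (1 / w)))
      (nhdsWithin 0 (Set.Ioi 0)) (nhds 1) := by
  have hα : 0 < α := lt_of_le_of_lt h0 h1
  have hΓα : 0 < Real.Gamma (1 - α) := Real.Gamma_pos_of_pos (by linarith)
  set g : ℝ → ℝ := fun x => x / Real.Gamma (1 - x) with hg
  set φ : ℝ → ℝ → ℝ := fun w x => (-Real.log w) * w ^ (α - x) with hφ
  -- continuity of g on Icc τ α
  have hgc : ∀ x ∈ Set.Icc τ α, ContinuousAt g x := by
    intro x hx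
    have h1x : 0 < 1 - x := by have := hx.2; linarith
    have hΓ : ContinuousAt (fun x : ℝ => Real.Gamma (1 - x)) x := by
      have := (Real.differentiableAt_Gamma (s := 1 - x)
        (fun m => by have : (0:ℝ) ≤ m := Nat.cast_nonneg m; intro h; rw [h] at h1x; linarith)).continuousAt
      exact this.comp ((continuous_const.sub continuous_id).continuousAt)
    exact continuousAt_id.div hΓ (Real.Gamma_pos_of_pos h1x).ne'
  have hgcont : ContinuousOn g (Set.Icc τ α) := fun x hx => (hgc x hx).continuousWithinAt
  -- peak function convergence
  have key : Filter.Tendsto (fun w => ∫ x in Set.Icc τ α, φ w x • g x)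
      (nhdsWithin 0 (Set.Ioi 0)) (nhds (g α)) := by
    apply tendsto_setIntegral_peak_smul_of_integrableOn_of_tendsto
      (s := Set.Icc τ α) (t := Set.Icc τ α) measurableSet_Icc measurableSet_Icc
      subset_rfl self_mem_nhdsWithin measure_Icc_lt_top.ne
    · -- nonneg
      filter_upwards [Ioo_mem_nhdsGT_of_mem (Set.left_mem_Ico.2 one_pos)] with w hw x hx
      have hlw : Real.log w < 0 := Real.log_neg hw.1 hw.2
      simp only [hφ]
      exact mul_nonneg (by linarith) (Real.rpow_nonneg hw.1.le _)
    · -- uniform convergence away from α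
      intro u hu hαu
      obtain ⟨δ, hδ, hδu⟩ := Metric.isOpen_iff.1 hu α hαu
      rw [Metric.tendstoUniformlyOn_iff]
      have hlim : Filter.Tendsto (fun w : ℝ => -(Real.log w * w ^ δ))
          (nhdsWithin 0 (Set.Ioi 0)) (nhds 0) := by
        simpa using (tendsto_log_mul_rpow_nhdsGT_zero hδ).neg
      intro ε hε
      filter_upwards [Ioo_mem_nhdsGT_of_mem (Set.left_mem_Ico.2 one_pos),
        hlim.eventually (eventually_lt_nhds hε)] with w hw hw2 x hx
      have hL : 0 < -Real.log w := by
        have := Real.log_neg hw.1 hw.2; linarith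
      have hxδ : δ ≤ α - x := by
        by_contra h
        push_neg at h
        have : x ∈ u := by
          apply hδu
          simp only [Metric.mem_ball, Real.dist_eq, abs_lt]
          constructor <;> [linarith; nlinarith [hx.1.2]]
        exact hx.2 this
      have hle : w ^ (α - x) ≤ w ^ δ :=
        Real.rpow_le_rpow_of_exponent_ge hw.1 hw.2.le hxδ
      have hpos : (0:ℝ) < w ^ (α - x) := Real.rpow_pos_of_pos hw.1 _
      have : φ w x ≤ -(Real.log w * w ^ δ) := by
        simp only [hφ, neg_mul]
        nlinarith
      rw [Real.dist_eq, abs_sub_comm]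
      have hφnn : 0 ≤ φ w x := by positivity
      rw [abs_of_nonneg (by simpa using hφnn)]
      calc φ w x - 0 ≤ -(Real.log w * w ^ δ) := by linarith
        _ < ε := hw2
    · -- integral tends to 1
      have hval : ∀ w ∈ Set.Ioi (0:ℝ), (∫ x in Set.Icc τ α, φ w x) = 1 - w ^ (α - τ) := by
        intro w hw
        have hw' : (0:ℝ) < w := hw
        rw [MeasureTheory.integral_Icc_eq_integral_Ioc,
          ← intervalIntegral.integral_of_le h1.le]
        have : ∀ x ∈ Set.uIcc τ α,
            HasDerivAt (fun x => Real.exp ((α - x) * Real.log w)) (φ w x) x := by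
          intro x _
          have h1 : HasDerivAt (fun x : ℝ => (α - x) * Real.log w) (-Real.log w) x := by
            simpa using ((hasDerivAt_id x).const_sub α).mul_const (Real.log w)
          have := h1.exp
          simpa [hφ, Real.rpow_def_of_pos hw', mul_comm] using this
        rw [intervalIntegral.integral_eq_sub_of_hasDerivAt this]
        · simp [Real.rpow_def_of_pos hw', mul_comm]
        · apply ContinuousOn.intervalIntegrable
          have hc : Continuous (fun x : ℝ => (-Real.log w) * Real.exp ((α - x) * Real.log w)) := by
            fun_prop
          exact hc.continuousOn.congr fun x _ => by
            simp [hφ, Real.rpow_def_of_pos hw', mul_comm]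
      have hlim : Filter.Tendsto (fun w : ℝ => 1 - w ^ (α - τ))
          (nhdsWithin 0 (Set.Ioi 0)) (nhds 1) := by
        have h : Filter.Tendsto (fun w : ℝ => w ^ (α - τ)) (nhdsWithin 0 (Set.Ioi 0)) (nhds 0) := by
          have hc := (Real.continuousAt_rpow_const 0 (α - τ) (Or.inr (by linarith))).continuousWithinAt
            (s := Set.Ioi (0:ℝ))
          have hc' : Filter.Tendsto (fun w : ℝ => w ^ (α - τ)) (nhdsWithin 0 (Set.Ioi 0))
              (nhds ((0:ℝ) ^ (α - τ))) := hc
          rwa [Real.zero_rpow (by linarith : α - τ ≠ 0)] at hc'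
        simpa using (tendsto_const_nhds (x := (1:ℝ)).sub h)
      exact hlim.congr' (by filter_upwards [self_mem_nhdsWithin] with w hw using (hval w hw).symm)
    · -- measurability
      filter_upwards [self_mem_nhdsWithin] with w (hw : (0:ℝ) < w)
      apply Continuous.aestronglyMeasurable
      apply continuous_const.mul
      have : Continuous (fun x : ℝ => Real.exp ((α - x) * Real.log w)) := by fun_prop
      refine this.congr fun x => ?_
      rw [Real.rpow_def_of_pos hw, mul_comm]
    · exact hgcont.integrableOn_Icc
    · exact (hgc α (Set.right_mem_Icc.2 h1.le)).continuousWithinAt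
  -- rewrite the target as the peak integral times a constant
  have hgα : g α = α / Real.Gamma (1 - α) := rfl
  have final : Filter.Tendsto (fun w => (∫ x in Set.Icc τ α, φ w x • g x) * (Real.Gamma (1 - α) / α))
      (nhdsWithin 0 (Set.Ioi 0)) (nhds 1) := by
    have := key.mul_const (Real.Gamma (1 - α) / α)
    rw [hgα] at this
    convert this using 2
    field_simp
  apply final.congr'
  filter_upwards [Ioo_mem_nhdsGT_of_mem (Set.left_mem_Ico.2 one_pos)] with w hw
  have hw0 : (0:ℝ) < w := hw.1
  have hL : 0 < -Real.log w := by have := Real.log_neg hw.1 hw.2; linarith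
  -- express peak integral in terms of the rhoMSt integral
  have hpt : ∀ x : ℝ, φ w x • g x = ((-Real.log w) * w ^ (α + 1)) * (g x * w ^ (-1 - x)) := by
    intro x
    have : w ^ (α - x) = w ^ (α + 1) * w ^ (-1 - x) := by
      rw [← Real.rpow_add hw0]; ring_nf
    simp only [smul_eq_mul, hφ, this]
    ring
  have hI : (∫ x in Set.Icc τ α, φ w x • g x)
      = ((-Real.log w) * w ^ (α + 1)) * ∫ x in τ..α, g x * w ^ (-1 - x) := by
    rw [MeasureTheory.integral_Icc_eq_integral_Ioc, ← intervalIntegral.integral_of_le h1.le]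
    simp only [hpt]
    rw [intervalIntegral.integral_const_mul]
  rw [hI]
  have hlog : Real.log (1 / w) = -Real.log w := by rw [one_div, Real.log_inv]
  have hrw : w ^ (-1 - α) * w ^ (α + 1) = 1 := by
    have h : (-1 - α) + (α + 1) = 0 := by ring
    rw [← Real.rpow_add hw0, h, Real.rpow_zero]
  have hΓne : Real.Gamma (1 - α) ≠ 0 := hΓα.ne'
  have hατ : α - τ ≠ 0 := by linarith
  have hwne : w ^ (-1 - α) ≠ 0 := (Real.rpow_pos_of_pos hw0 _).ne'
  rw [hlog]
  simp only [rhoMSt, hg]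
  set J := ∫ x in τ..α, x / Real.Gamma (1 - x) * w ^ (-1 - x) with hJ
  have hLne : -Real.log w ≠ 0 := hL.ne'
  have hαne : α ≠ 0 := hα.ne'
  field_simp
  linear_combination (-(Real.log w * J)) * hrw
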